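/- Let k be an odd positive integer and X ⊆ S¹ a subset with 2k+2 points such that t_b(X) < t_d(X). Then t_d(X) ≥ (k+1)(π − t_b(X)). -/
import Mathlib


/-- The largest distance from `x` to any point of `X`. -/
noncomputable def ptTd (X : Type*) [MetricSpace X] (x : X) : ℝ :=
  sSup (Set.range fun y => dist x y)

/-- The second largest distance (counted with multiplicity over points) from `x`
to points of `X`. -/
noncomputable def ptTb (X : Type*) [MetricSpace X] (x : X) : ℝ :=
  sSup {r : ℝ | ∃ y z : X, y ≠ z ∧ r = min (dist x y) (dist x z)}

/-- `t_b(X) = max_{x ∈ X} t_b(x)`. -/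
noncomputable def tbX (X : Type*) [MetricSpace X] : ℝ :=
  sSup (Set.range (ptTb X))

/-- `t_d(X) = min_{x ∈ X} t_d(x)`. -/
noncomputable def tdX (X : Type*) [MetricSpace X] : ℝ :=
  sInf (Set.range (ptTd X))

lemma chain_aux (e q : ℝ) : ∀ (j : ℕ) (T : Finset ℝ) (x y : ℝ), T.card = 2*j+1 →
    (∀ a ∈ T, x < a ∧ a < y) →
    (∀ a ∈ T, ∃ b : ℝ, q - e < b - a ∧ b - a < q + e ∧
      ∀ c, (c = x ∨ c ∈ T ∨ c = y) → c ≠ a → b - c ≤ q - e ∨ q + e ≤ b - c) →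
    ((2*j+1 : ℕ) + 1 : ℝ) * e ≤ y - x := by
  intro j
  induction j with
  | zero =>
    intro T x y hcard hT hp
    obtain ⟨a, rfl⟩ := Finset.card_eq_one.mp (by simpa using hcard)
    have hTa := hT a (Finset.mem_singleton_self a)
    obtain ⟨b, hb1, hb2, hb3⟩ := hp a (Finset.mem_singleton_self a)
    have hy : b - y ≤ q - e := by
      rcases hb3 y (Or.inr (Or.inr rfl)) hTa.2.ne' with h | h
      · exact h
      · linarith [hTa.2]
    have hx : q + e ≤ b - x := by
      rcases hb3 x (Or.inl rfl) hTa.1.ne with h | h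
      · linarith [hTa.1]
      · exact h
    push_cast
    linarith
  | succ n ih =>
    intro T x y hcard hT hp
    have hT0 : T.Nonempty := Finset.card_pos.mp (by rw [hcard]; omega)
    set a1 := T.min' hT0 with ha1def
    have ha1 : a1 ∈ T := T.min'_mem hT0
    set T1 := T.erase a1 with hT1def
    have hcard1 : T1.card = 2*n+2 := by
      rw [hT1def, Finset.card_erase_of_mem ha1, hcard]; omega
    have hT1ne : T1.Nonempty := Finset.card_pos.mp (by rw [hcard1]; omega)
    set a2 := T1.min' hT1ne with ha2def
    have ha2T1 : a2 ∈ T1 := T1.min'_mem hT1ne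
    have ha2T : a2 ∈ T := Finset.mem_of_mem_erase ha2T1
    have ha2ne : a2 ≠ a1 := Finset.ne_of_mem_erase ha2T1
    have ha12 : a1 < a2 := lt_of_le_of_ne (T.min'_le a2 ha2T) (Ne.symm ha2ne)
    obtain ⟨b, hb1, hb2, hb3⟩ := hp a1 ha1
    have h2 : b - a2 ≤ q - e := by
      rcases hb3 a2 (Or.inr (Or.inl ha2T)) ha2ne with h | h
      · exact h
      · linarith
    have hx : q + e ≤ b - x := by
      rcases hb3 x (Or.inl rfl) (hT a1 ha1).1.ne with h | h
      · linarith [(hT a1 ha1).1]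
      · exact h
    have hstep : 2*e ≤ a2 - x := by linarith
    set T2 := T1.erase a2 with hT2def
    have hcard2 : T2.card = 2*n+1 := by
      rw [hT2def, Finset.card_erase_of_mem ha2T1, hcard1]; omega
    have hrec := ih T2 a2 y hcard2 ?_ ?_
    · push_cast at hrec ⊢
      linarith
    · intro a ha
      have haT1 : a ∈ T1 := Finset.mem_of_mem_erase ha
      have haT : a ∈ T := Finset.mem_of_mem_erase haT1
      exact ⟨lt_of_le_of_ne (T1.min'_le a haT1) (Ne.symm (Finset.ne_of_mem_erase ha)),
        (hT a haT).2⟩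
    · intro a ha
      have haT : a ∈ T := Finset.mem_of_mem_erase (Finset.mem_of_mem_erase ha)
      obtain ⟨b', h1, h2', h3⟩ := hp a haT
      refine ⟨b', h1, h2', ?_⟩
      intro c hc hca
      refine h3 c ?_ hca
      rcases hc with rfl | hc | rfl
      · exact Or.inr (Or.inl ha2T)
      · exact Or.inr (Or.inl (Finset.mem_of_mem_erase (Finset.mem_of_mem_erase hc)))
      · exact Or.inr (Or.inr rfl)

set_option maxHeartbeats 1000000 in
lemma aux_norm (δ : ℝ) (h0 : 0 ≤ δ) (h2 : δ ≤ 2*Real.pi) :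
    ‖((δ:ℝ) : AddCircle (2*Real.pi))‖ = min δ (2*Real.pi - δ) := by
  have hπ := Real.pi_pos
  have hp0 : (2*Real.pi) ≠ 0 := by positivity
  rcases le_total δ Real.pi with hle | hge
  · have habs : |δ| ≤ |2*Real.pi|/2 := by
      rw [abs_of_nonneg h0, abs_of_nonneg (by positivity)]; linarith
    have hh := (AddCircle.norm_coe_eq_abs_iff (2*Real.pi) (x := δ) hp0).mpr habs
    rw [hh, abs_of_nonneg h0, min_eq_left (by linarith)]
  · have hcoe : ((δ:ℝ) : AddCircle (2*Real.pi)) = (((δ - 2*Real.pi : ℝ)) : AddCircle (2*Real.pi)) := by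
      have h := AddCircle.coe_add_period (2*Real.pi) (δ - 2*Real.pi)
      rw [show δ - 2*Real.pi + 2*Real.pi = δ by ring] at h
      exact h
    have habs : |δ - 2*Real.pi| ≤ |2*Real.pi|/2 := by
      rw [abs_of_nonpos (by linarith), abs_of_nonneg (by positivity)]; linarith
    have hh := (AddCircle.norm_coe_eq_abs_iff (2*Real.pi) (x := δ - 2*Real.pi) hp0).mpr habs
    rw [hcoe, hh, abs_of_nonpos (by linarith), min_eq_right (by linarith)]
    ring


/-- Abstract combinatorial core of the argument, over an opaque finite index type. -/
lemma abstract_main (k j : ℕ) (hj : k = 2*j+1) {ι : Type*} [Fintype ι] [DecidableEq ι]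
    (hcardU : Fintype.card ι = 2*k+2) (L : ι → ℝ) (F : ι → ι) (β : ℝ) (x0 : ι)
    (hFF : ∀ x, F (F x) = x) (hFne : ∀ x, F x ≠ x)
    (hLmem : ∀ z, 0 ≤ L z ∧ L z < 2*Real.pi) (hLx0 : L x0 = 0)
    (hLinj : ∀ z w, L z = L w → z = w)
    (hpair : ∀ z, β < min |L (F z) - L z| (2*Real.pi - |L (F z) - L z|))
    (hother : ∀ z w, w ≠ F z → min |L w - L z| (2*Real.pi - |L w - L z|) ≤ β) :
    ((k:ℝ)+1) * (Real.pi - β) ≤ min (L (F x0)) (2*Real.pi - L (F x0)) := by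
  classical
  have hFinj : Function.Injective F := fun a b hab => by
    rw [← hFF a, hab, hFF]
  have hub : ∀ z w : ι, L z ≤ L w → w ≠ F z →
      min (L w - L z) (2*Real.pi - (L w - L z)) ≤ β := by
    intro z w hle hne
    have h1 := hother z w hne
    rwa [abs_of_nonneg (by linarith)] at h1
  have hlb : ∀ z : ι, L z ≤ L (F z) →
      β < min (L (F z) - L z) (2*Real.pi - (L (F z) - L z)) := by
    intro z hle
    have h1 := hpair z
    rwa [abs_of_nonneg (by linarith)] at h1
  have hlb' : ∀ z : ι, L (F z) ≤ L z →
      β < min (L z - L (F z)) (2*Real.pi - (L z - L (F z))) := by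
    intro z hle
    have h1 := hpair z
    rwa [abs_of_nonpos (by linarith), neg_sub] at h1
  set S : ℝ := L (F x0) with hSdef
  have hS2 : S < 2*Real.pi := (hLmem (F x0)).2
  have hS0 : 0 < S := by
    rcases lt_or_eq_of_le (hLmem (F x0)).1 with h1 | h1
    · exact h1
    · exact absurd (hLinj (F x0) x0 (by rw [← h1, hLx0])) (hFne x0)
  have hpx0 : β < min S (2*Real.pi - S) := by
    have h1 := hlb x0 (by rw [hLx0]; exact (hLmem _).1)
    rwa [hLx0, sub_zero, ← hSdef] at h1
  have hSβ1 : β < S := lt_of_lt_of_le hpx0 (min_le_left _ _)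
  have hSβ2 : β < 2*Real.pi - S := lt_of_lt_of_le hpx0 (min_le_right _ _)
  have hLz0 : ∀ z : ι, L z = 0 → z = x0 := fun z hz => hLinj z x0 (by rw [hz, hLx0])
  -- interior and exterior points
  set IntS : Finset ι := Finset.univ.filter (fun z => 0 < L z ∧ L z < S) with hIntdef
  set ExtS : Finset ι := Finset.univ.filter (fun z => S < L z) with hExtdef
  have hmemInt : ∀ z : ι, z ∈ IntS ↔ (0 < L z ∧ L z < S) := by
    intro z; simp [hIntdef]
  have hmemExt : ∀ z : ι, z ∈ ExtS ↔ S < L z := by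
    intro z; simp [hExtdef]
  have htri : ∀ z : ι, z = x0 ∨ z = F x0 ∨ z ∈ IntS ∨ z ∈ ExtS := by
    intro z
    rcases eq_or_ne z x0 with rfl | h1
    · exact Or.inl rfl
    rcases eq_or_ne z (F x0) with rfl | h2
    · exact Or.inr (Or.inl rfl)
    have hz0 : 0 < L z := by
      rcases lt_or_eq_of_le (hLmem z).1 with h3 | h3
      · exact h3
      · exact absurd (hLz0 z h3.symm) h1
    rcases lt_trichotomy (L z) S with hlt | heq | hgt
    · exact Or.inr (Or.inr (Or.inl ((hmemInt z).mpr ⟨hz0, hlt⟩)))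
    · exact absurd (hLinj z (F x0) (by rw [heq, ← hSdef])) h2
    · exact Or.inr (Or.inr (Or.inr ((hmemExt z).mpr hgt)))
  -- crossing lemmas
  have cross_in : ∀ z : ι, z ∈ IntS → F z ∈ IntS → False := by
    have H : ∀ z : ι, z ∈ IntS → F z ∈ IntS → L z < L (F z) → False := by
      intro z hz hFz hlt
      rw [hmemInt] at hz hFz
      have hzx0 : z ≠ x0 := fun e => by rw [e, hLx0] at hz; exact lt_irrefl _ hz.1
      have h1 := hub x0 (F z) (by rw [hLx0]; exact (hLmem _).1) (fun e => hzx0 (hFinj e))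
      rw [hLx0, sub_zero] at h1
      have hA := (lt_min_iff.mp (hlb z hlt.le)).1
      rcases min_le_iff.mp h1 with h3 | h3
      · linarith [hz.1]
      · linarith [hFz.2, hSβ2]
    intro z hz hFz
    rcases lt_or_gt_of_ne (fun e : L z = L (F z) => hFne z (hLinj (F z) z e.symm)) with hlt | hgt
    · exact H z hz hFz hlt
    · exact H (F z) hFz (by rw [hFF]; exact hz) (by rw [hFF]; exact hgt)
  have cross_ext : ∀ z : ι, z ∈ ExtS → F z ∈ ExtS → False := by
    have H : ∀ z : ι, z ∈ ExtS → F z ∈ ExtS → L z < L (F z) → False := by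
      intro z hz hFz hlt
      rw [hmemExt] at hz hFz
      have hzFx0 : z ≠ F x0 := fun e => by rw [e, ← hSdef] at hz; exact lt_irrefl _ hz
      have h1 := hub x0 z (by rw [hLx0]; exact (hLmem _).1) hzFx0
      rw [hLx0, sub_zero] at h1
      have hA := (lt_min_iff.mp (hlb z hlt.le)).1
      rcases min_le_iff.mp h1 with h3 | h3
      · linarith [hSβ1]
      · linarith [(hLmem (F z)).2]
    intro z hz hFz
    rcases lt_or_gt_of_ne (fun e : L z = L (F z) => hFne z (hLinj (F z) z e.symm)) with hlt | hgt
    · exact H z hz hFz hlt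
    · exact H (F z) hFz (by rw [hFF]; exact hz) (by rw [hFF]; exact hgt)
  -- F maps interior to exterior and back
  have hmapIE : ∀ z : ι, z ∈ IntS → F z ∈ ExtS := by
    intro z hz
    rcases htri (F z) with h1 | h1 | h1 | h1
    · exfalso
      have hzF : z = F x0 := by rw [← hFF z, h1]
      rw [hmemInt, hzF, ← hSdef] at hz
      exact lt_irrefl _ hz.2
    · exfalso
      have hzx : z = x0 := hFinj h1
      rw [hmemInt, hzx, hLx0] at hz
      exact lt_irrefl _ hz.1
    · exact absurd h1 (fun h1 => cross_in z hz h1)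
    · exact h1
  have hmapEI : ∀ z : ι, z ∈ ExtS → F z ∈ IntS := by
    intro z hz
    rcases htri (F z) with h1 | h1 | h1 | h1
    · exfalso
      have hzF : z = F x0 := by rw [← hFF z, h1]
      rw [hmemExt, hzF, ← hSdef] at hz
      exact lt_irrefl _ hz
    · exfalso
      have hzx : z = x0 := hFinj h1
      rw [hmemExt, hzx, hLx0] at hz
      linarith
    · exact h1
    · exact absurd h1 (fun h1 => cross_ext z hz h1)
  -- cardinalities
  have hcardIE : IntS.card = ExtS.card := by
    apply le_antisymm
    · exact Finset.card_le_card_of_injOn F (fun z hz => hmapIE z hz)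
        (Function.Injective.injOn hFinj)
    · exact Finset.card_le_card_of_injOn F (fun z hz => hmapEI z hz)
        (Function.Injective.injOn hFinj)
  have hdisj : Disjoint IntS ExtS := by
    rw [Finset.disjoint_left]
    intro z hz1 hz2
    rw [hmemInt] at hz1
    rw [hmemExt] at hz2
    linarith [hz1.2]
  have hIE_iff : ∀ z : ι, (z ∈ IntS ∨ z ∈ ExtS) ↔ (z ≠ x0 ∧ z ≠ F x0) := by
    intro z
    constructor
    · intro hz
      constructor
      · rintro rfl
        rcases hz with hz | hz
        · rw [hmemInt, hLx0] at hz; exact lt_irrefl _ hz.1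
        · rw [hmemExt, hLx0] at hz; linarith
      · rintro rfl
        rcases hz with hz | hz
        · rw [hmemInt, ← hSdef] at hz; exact lt_irrefl _ hz.2
        · rw [hmemExt, ← hSdef] at hz; exact lt_irrefl _ hz
    · rintro ⟨h1, h2⟩
      rcases htri z with rfl | rfl | hz | hz
      · exact absurd rfl h1
      · exact absurd rfl h2
      · exact Or.inl hz
      · exact Or.inr hz
  have hcardsum : IntS.card + ExtS.card = 2*k := by
    have h1 : (IntS ∪ ExtS).card = IntS.card + ExtS.card := Finset.card_union_of_disjoint hdisj
    have h2 : IntS ∪ ExtS = Finset.univ \ {x0, F x0} := by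
      ext z
      rw [Finset.mem_union, Finset.mem_sdiff]
      simp only [Finset.mem_univ, true_and, Finset.mem_insert, Finset.mem_singleton]
      rw [hIE_iff z]
      tauto
    have h3 : ({x0, F x0} : Finset ι).card = 2 := by
      rw [Finset.card_insert_of_notMem
          (by simp only [Finset.mem_singleton]; exact fun e => hFne x0 e.symm),
        Finset.card_singleton]
    have h4 : (Finset.univ \ {x0, F x0} : Finset ι).card = 2*k+2 - 2 := by
      rw [Finset.card_sdiff_of_subset (Finset.subset_univ _), Finset.card_univ, hcardU, h3]
    rw [← h1, h2, h4]
    omega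
  have hcardInt : IntS.card = k := by omega
  have hcardExt : ExtS.card = k := by omega
  -- first chain : interior, from 0 to S
  have hmem1 : ∀ a ∈ IntS.image L, (0:ℝ) < a ∧ a < S := by
    intro a ha
    rw [Finset.mem_image] at ha
    obtain ⟨z, hz, rfl⟩ := ha
    exact (hmemInt z).mp hz
  have hp1 : ∀ a ∈ IntS.image L, ∃ b : ℝ,
      Real.pi - (Real.pi - β) < b - a ∧ b - a < Real.pi + (Real.pi - β) ∧
      ∀ c, (c = 0 ∨ c ∈ IntS.image L ∨ c = S) → c ≠ a →
        b - c ≤ Real.pi - (Real.pi - β) ∨ Real.pi + (Real.pi - β) ≤ b - c := by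
    intro a ha
    rw [Finset.mem_image] at ha
    obtain ⟨z, hz, rfl⟩ := ha
    have hzI := (hmemInt z).mp hz
    have hFzE := (hmemExt (F z)).mp (hmapIE z hz)
    have hzw : L z ≤ L (F z) := le_of_lt (lt_trans hzI.2 hFzE)
    have h2 := hlb z hzw
    have h2a := (lt_min_iff.mp h2).1
    have h2b := (lt_min_iff.mp h2).2
    refine ⟨L (F z), by linarith, by linarith, ?_⟩
    intro cc hcc hcca
    obtain ⟨w, hwL, hwz⟩ : ∃ w : ι, L w = cc ∧ L w ≤ S := by
      rcases hcc with hceq | hcc | hceq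
      · exact ⟨x0, by rw [hLx0, hceq], by rw [hLx0]; exact hS0.le⟩
      · rw [Finset.mem_image] at hcc
        obtain ⟨w, hw, rfl⟩ := hcc
        exact ⟨w, rfl, ((hmemInt w).mp hw).2.le⟩
      · refine ⟨F x0, ?_, ?_⟩
        · rw [← hSdef]; exact hceq.symm
        · rw [← hSdef]
    have hwne : w ≠ z := fun e => hcca (by rw [← hwL, e])
    have h1 := hub w (F z) (le_trans hwz hFzE.le) (fun e => hwne (hFinj e).symm)
    rw [hwL] at h1
    rcases min_le_iff.mp h1 with h3 | h3
    · left; linarith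
    · right; linarith
  have hcard1 : (IntS.image L).card = 2*j+1 := by
    rw [Finset.card_image_of_injOn (fun z _ w _ hzw => hLinj z w hzw), hcardInt, hj]
  have hchain1 := chain_aux (Real.pi - β) Real.pi j (IntS.image L) 0 S hcard1 hmem1 hp1
  -- second chain : exterior, from S to 2π
  have hmem2 : ∀ a ∈ ExtS.image L, S < a ∧ a < 2*Real.pi := by
    intro a ha
    rw [Finset.mem_image] at ha
    obtain ⟨z, hz, rfl⟩ := ha
    exact ⟨(hmemExt z).mp hz, (hLmem z).2⟩
  have hp2 : ∀ a ∈ ExtS.image L, ∃ b : ℝ,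
      Real.pi - (Real.pi - β) < b - a ∧ b - a < Real.pi + (Real.pi - β) ∧
      ∀ c, (c = S ∨ c ∈ ExtS.image L ∨ c = 2*Real.pi) → c ≠ a →
        b - c ≤ Real.pi - (Real.pi - β) ∨ Real.pi + (Real.pi - β) ≤ b - c := by
    intro a ha
    rw [Finset.mem_image] at ha
    obtain ⟨z, hz, rfl⟩ := ha
    have hzE := (hmemExt z).mp hz
    have hFzI := (hmemInt (F z)).mp (hmapEI z hz)
    have hzw : L (F z) ≤ L z := le_of_lt (lt_trans hFzI.2 hzE)
    have h2 := hlb' z hzw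
    have h2a := (lt_min_iff.mp h2).1
    have h2b := (lt_min_iff.mp h2).2
    refine ⟨L (F z) + 2*Real.pi, by linarith, by linarith, ?_⟩
    intro cc hcc hcca
    rcases hcc with hceq | hcc | hceq
    · -- cc = S, witness F x0
      have hFx0ne : F x0 ≠ z := fun e => by
        rw [← e, ← hSdef] at hzE; exact lt_irrefl _ hzE
      have h1 := hub (F z) (F x0) (by rw [← hSdef]; exact hFzI.2.le)
        (by rw [hFF]; exact hFx0ne)
      rw [← hSdef] at h1
      rcases min_le_iff.mp h1 with h3 | h3
      · right; rw [hceq]; linarith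
      · left; rw [hceq]; linarith
    · -- cc in exterior image
      rw [Finset.mem_image] at hcc
      obtain ⟨w, hw, rfl⟩ := hcc
      have hwE := (hmemExt w).mp hw
      have hwne : w ≠ z := fun e => hcca (by rw [e])
      have h1 := hub (F z) w (le_of_lt (lt_trans hFzI.2 hwE)) (by rw [hFF]; exact hwne)
      rcases min_le_iff.mp h1 with h3 | h3
      · right; linarith
      · left; linarith
    · -- cc = 2π, witness x0
      have hx0ne : x0 ≠ z := fun e => by
        rw [← e, hLx0] at hzE; linarith
      have h1 := hub x0 (F z) (by rw [hLx0]; exact (hLmem _).1)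
        (fun e => hx0ne (hFinj e).symm)
      rw [hLx0, sub_zero] at h1
      rcases min_le_iff.mp h1 with h3 | h3
      · left; rw [hceq]; linarith
      · right; rw [hceq]; linarith
  have hcard2 : (ExtS.image L).card = 2*j+1 := by
    rw [Finset.card_image_of_injOn (fun z _ w _ hzw => hLinj z w hzw), hcardExt, hj]
  have hchain2 := chain_aux (Real.pi - β) Real.pi j (ExtS.image L) S (2*Real.pi) hcard2 hmem2 hp2
  push_cast at hchain1 hchain2
  apply le_min
  · rw [hj]; push_cast; linarith
  · rw [hj]; push_cast; linarith

set_option maxHeartbeats 1000000 in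
/-- For odd `k ≥ 1` and a subset `X` of the circle with `2k+2` points satisfying
`t_b(X) < t_d(X)`, one has `t_d(X) ≥ (k+1)(π - t_b(X))`. -/
theorem tdX_ge_of_circle_odd (k : ℕ) (hk : Odd k) (hk1 : 1 ≤ k)
    (s : Finset (AddCircle (2 * Real.pi))) (hcard : s.card = 2 * k + 2)
    (h : tbX ↥s < tdX ↥s) :
    ((k : ℝ) + 1) * (Real.pi - tbX ↥s) ≤ tdX ↥s := by
  classical
  have hπ : (0:ℝ) < Real.pi := Real.pi_pos
  haveI hfact : Fact ((0:ℝ) < 2 * Real.pi) := ⟨by positivity⟩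
  have hne : s.Nonempty := Finset.card_pos.mp (by rw [hcard]; omega)
  haveI : Nonempty ↥s := ⟨⟨hne.choose, hne.choose_spec⟩⟩
  have hcardU : Fintype.card ↥s = 2*k+2 := by rw [Fintype.card_coe, hcard]
  -- basic facts about ptTd, ptTb, tbX, tdX
  have hfin_td : ∀ x : ↥s, (Set.range fun y : ↥s => dist x y).Finite :=
    fun x => Set.finite_range _
  have hexF : ∀ x : ↥s, ∃ y, ptTd ↥s x = dist x y := by
    intro x
    have hm : ptTd ↥s x ∈ Set.range fun y : ↥s => dist x y :=
      Set.Nonempty.csSup_mem ⟨dist x x, ⟨x, rfl⟩⟩ (hfin_td x)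
    obtain ⟨y, hy⟩ := hm
    exact ⟨y, hy.symm⟩
  set F : ↥s → ↥s := fun x => (hexF x).choose with hFdef
  have hFd : ∀ x, ptTd ↥s x = dist x (F x) := fun x => (hexF x).choose_spec
  have hSb_fin : ∀ x : ↥s,
      {r : ℝ | ∃ y z : ↥s, y ≠ z ∧ r = min (dist x y) (dist x z)}.Finite := by
    intro x
    apply Set.Finite.subset (Set.finite_range fun p : ↥s × ↥s => min (dist x p.1) (dist x p.2))
    rintro r ⟨y, z, -, rfl⟩
    exact ⟨(y, z), rfl⟩
  have hmin_le : ∀ x y z : ↥s, y ≠ z → min (dist x y) (dist x z) ≤ tbX ↥s := by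
    intro x y z hyz
    have h1 : min (dist x y) (dist x z) ≤ ptTb ↥s x :=
      le_csSup (hSb_fin x).bddAbove ⟨y, z, hyz, rfl⟩
    have h2 : ptTb ↥s x ≤ tbX ↥s :=
      le_csSup (Set.finite_range _).bddAbove ⟨x, rfl⟩
    linarith
  have htd_le : ∀ x : ↥s, tdX ↥s ≤ ptTd ↥s x := fun x =>
    csInf_le (Set.finite_range _).bddBelow ⟨x, rfl⟩
  obtain ⟨x0, hx0⟩ : ∃ x0 : ↥s, ptTd ↥s x0 = tdX ↥s :=
    Set.Nonempty.csInf_mem (Set.range_nonempty _) (Set.finite_range _)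
  set β := tbX ↥s with hβdef
  have hpair_gt : ∀ x : ↥s, β < dist x (F x) := fun x =>
    lt_of_lt_of_le h (le_of_le_of_eq (htd_le x) (hFd x))
  have hβ0 : (0:ℝ) ≤ β := by
    obtain ⟨y, z, hyz⟩ := Fintype.exists_pair_of_one_lt_card (α := ↥s) (by rw [hcardU]; omega)
    exact le_trans (le_min dist_nonneg dist_nonneg) (hmin_le y y z hyz)
  have hother : ∀ x y : ↥s, y ≠ F x → dist x y ≤ β := by
    intro x y hy
    rcases eq_or_ne y x with rfl | hyx
    · rw [dist_self]; exact hβ0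
    · by_contra hgt
      push_neg at hgt
      have h1 := hmin_le x y (F x) hy
      have h2 := lt_min hgt (hpair_gt x)
      exact absurd h1 (not_le.mpr h2)
  have hFne : ∀ x, F x ≠ x := by
    intro x hx
    have h1 := hpair_gt x
    rw [hx, dist_self] at h1
    exact absurd h1 (not_lt.mpr hβ0)
  have hFF : ∀ x, F (F x) = x := by
    intro x
    by_contra hne'
    have h1 : dist (F x) x ≤ β := hother (F x) x fun e => hne' e.symm
    have h2 := hpair_gt x
    rw [dist_comm] at h2
    linarith
  have hFinj : Function.Injective F := fun a b hab => by
    rw [← hFF a, hab, hFF]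
  have hotherC : ∀ x w : ↥s, w ≠ F x →
      dist (x : AddCircle (2*Real.pi)) (w : AddCircle (2*Real.pi)) ≤ β := by
    intro x w hw
    rw [← Subtype.dist_eq]
    exact hother x w hw
  have hpairC : ∀ x : ↥s,
      β < dist (x : AddCircle (2*Real.pi)) ((F x : ↥s) : AddCircle (2*Real.pi)) := by
    intro x
    rw [← Subtype.dist_eq]
    exact hpair_gt x
  -- lifting to [0, 2π)
  set c : ℝ := ((AddCircle.equivIco (2*Real.pi) 0 (x0 : AddCircle (2*Real.pi))) : ℝ) with hcdef
  have hcx0 : ((c : ℝ) : AddCircle (2*Real.pi)) = (x0 : AddCircle (2*Real.pi)) :=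
    (AddCircle.equivIco (2*Real.pi) 0).symm_apply_apply _
  set L : ↥s → ℝ :=
    fun z => ((AddCircle.equivIco (2*Real.pi) c (z : AddCircle (2*Real.pi))) : ℝ) - c with hLdef
  have hLmem : ∀ z : ↥s, 0 ≤ L z ∧ L z < 2*Real.pi := by
    intro z
    have h1 := (AddCircle.equivIco (2*Real.pi) c (z : AddCircle (2*Real.pi))).2
    constructor
    · simp only [hLdef]; linarith [h1.1]
    · simp only [hLdef]; linarith [h1.2]
  have hLcoe : ∀ z : ↥s, ((L z + c : ℝ) : AddCircle (2*Real.pi)) = (z : AddCircle (2*Real.pi)) := by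
    intro z
    have he : (L z + c) = ((AddCircle.equivIco (2*Real.pi) c (z : AddCircle (2*Real.pi))) : ℝ) := by
      simp [hLdef]
    rw [he]
    exact (AddCircle.equivIco (2*Real.pi) c).symm_apply_apply _
  have hLx0 : L x0 = 0 := by
    have hmem : c ∈ Set.Ico c (c + 2*Real.pi) := ⟨le_rfl, by linarith⟩
    have h1 : AddCircle.equivIco (2*Real.pi) c (x0 : AddCircle (2*Real.pi)) = ⟨c, hmem⟩ := by
      rw [← hcx0]
      exact (AddCircle.equivIco (2*Real.pi) c).apply_symm_apply ⟨c, hmem⟩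
    simp [hLdef, h1]
  have hLinj : ∀ z w : ↥s, L z = L w → z = w := by
    intro z w hzw
    have he : (z : AddCircle (2*Real.pi)) = w := by
      rw [← hLcoe z, ← hLcoe w, hzw]
    exact Subtype.ext he
  have hdistL : ∀ z w : ↥s, L z ≤ L w →
      dist (z : AddCircle (2*Real.pi)) (w : AddCircle (2*Real.pi)) =
        min (L w - L z) (2*Real.pi - (L w - L z)) := by
    intro z w hle
    have key : ((L w + c : ℝ) : AddCircle (2*Real.pi)) - ((L z + c : ℝ) : AddCircle (2*Real.pi))
        = ((L w - L z : ℝ) : AddCircle (2*Real.pi)) := by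
      have h1 := AddCircle.coe_add (p := 2*Real.pi) (L w - L z) (L z + c)
      rw [show (L w - L z) + (L z + c) = L w + c by ring] at h1
      rw [h1]
      abel
    rw [dist_comm, dist_eq_norm, ← hLcoe z, ← hLcoe w, key]
    exact aux_norm _ (by linarith) (by linarith [(hLmem z).1, (hLmem w).2])
  have hdistAbs : ∀ z w : ↥s, dist (z : AddCircle (2*Real.pi)) (w : AddCircle (2*Real.pi)) =
      min |L w - L z| (2*Real.pi - |L w - L z|) := by
    intro z w
    rcases le_total (L z) (L w) with hle | hle
    · rw [hdistL z w hle, abs_of_nonneg (by linarith)]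
    · rw [dist_comm, hdistL w z hle, abs_of_nonpos (by linarith), neg_sub]
  have hpairA : ∀ z : ↥s, β < min |L (F z) - L z| (2*Real.pi - |L (F z) - L z|) := by
    intro z
    rw [← hdistAbs z (F z)]
    exact hpairC z
  have hotherA : ∀ z w : ↥s, w ≠ F z → min |L w - L z| (2*Real.pi - |L w - L z|) ≤ β := by
    intro z w hne
    rw [← hdistAbs z w]
    exact hotherC z w hne
  obtain ⟨j, hj⟩ := hk
  have habs := abstract_main k j hj hcardU L F β x0 hFF hFne hLmem hLx0 hLinj hpairA hotherA
  have hfinal : tdX ↥s = min (L (F x0)) (2*Real.pi - (L (F x0))) := by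
    rw [← hx0, hFd x0, Subtype.dist_eq,
      hdistL x0 (F x0) (by rw [hLx0]; exact (hLmem _).1), hLx0, sub_zero]
  rw [hfinal]
  exact habs
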